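/- arXiv:2406.16054 — 2 statements merged into one kernel-verified Lean document; each statement's English description precedes it below -/
import Mathlib

section
/- Derivability of weakest preconditions in PHL_d: for every command C and every deterministic assertion φ, the triple {wp(C,φ)} C {φ} is derivable in the proof system PHL_d, where wp is the weakest-precondition transformer defined structurally on commands. -/
open scoped ENNReal

/-! ## Deterministic and probabilistic states -/

abbrev DState (V : Type) := V → ℤ

abbrev PState (V : Type) := DState V → ℝ≥0∞

open Classical in
noncomputable def pointDist {V : Type} (S : DState V) : PState V :=
  fun S' => if S' = S then 1 else 0

def IsSubDist {V : Type} (μ : PState V) : Prop := (∑' S : DState V, μ S) ≤ 1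

/-! ## Arithmetic and Boolean expressions over program variables -/

inductive AExp (V : Type) where
  | const : ℤ → AExp V
  | pvar : V → AExp V
  | add : AExp V → AExp V → AExp V
  | sub : AExp V → AExp V → AExp V
  | mul : AExp V → AExp V → AExp V

def AExp.eval {V : Type} (S : DState V) : AExp V → ℤ
  | const n => n
  | pvar X => S X
  | add e1 e2 => e1.eval S + e2.eval S
  | sub e1 e2 => e1.eval S - e2.eval S
  | mul e1 e2 => e1.eval S * e2.eval S

inductive BExp (V : Type) where
  | tt : BExp V
  | ff : BExp V
  | le : AExp V → AExp V → BExp V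
  | lt : AExp V → AExp V → BExp V
  | eq : AExp V → AExp V → BExp V
  | not : BExp V → BExp V
  | and : BExp V → BExp V → BExp V

def BExp.holds {V : Type} (S : DState V) : BExp V → Prop
  | tt => True
  | ff => False
  | le e1 e2 => e1.eval S ≤ e2.eval S
  | lt e1 e2 => e1.eval S < e2.eval S
  | eq e1 e2 => e1.eval S = e2.eval S
  | not b => ¬ b.holds S
  | and b1 b2 => b1.holds S ∧ b2.holds S

open Classical in
/-- restriction `↓_B μ` of a probabilistic state to the states satisfying `B`. -/
noncomputable def dRestrict {V : Type} (B : BExp V) (μ : PState V) : PState V :=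
  fun S => if B.holds S then μ S else 0

/-! ## Commands -/

inductive Cmd (V : Type) where
  | skip : Cmd V
  | assign : V → AExp V → Cmd V
  /-- probabilistic assignment `X ←$ {a₁:k₁,…,aₙ:kₙ}`: a list of pairs of
  nonnegative-real weights and integer values, with the weights summing to 1. -/
  | passign : V → {l : List (NNReal × ℤ) // (l.map Prod.fst).sum = 1} → Cmd V
  | seq : Cmd V → Cmd V → Cmd V
  | ifte : BExp V → Cmd V → Cmd V → Cmd V
  | whileDo : BExp V → Cmd V → Cmd V

open Classical in
/-- semantics of the assignment of a state-dependent integer to variable `X`. -/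
noncomputable def detAssign {V : Type} (X : V) (f : DState V → ℤ) (μ : PState V) : PState V :=
  fun S' => ∑' S : DState V, μ S * pointDist (Function.update S X (f S)) S'

open Classical in
noncomputable def Cmd.sem {V : Type} : Cmd V → PState V → PState V
  | .skip, μ => μ
  | .assign X E, μ => detAssign X (fun S => E.eval S) μ
  | .passign X Rl, μ =>
      fun S' => (Rl.1.map (fun p => (p.1 : ℝ≥0∞) * detAssign X (fun _ => p.2) μ S')).sum
  | .seq C1 C2, μ => C2.sem (C1.sem μ)
  | .ifte B C1 C2, μ =>
      fun S' => C1.sem (dRestrict B μ) S' + C2.sem (dRestrict (BExp.not B) μ) S'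
  | .whileDo B C, μ =>
      fun S' => ∑' i : ℕ, dRestrict (BExp.not B) ((fun ν => C.sem (dRestrict B ν))^[i] μ) S'
termination_by C _ => sizeOf C

/-- `C.pow k` is the `k`-fold sequential composition of `C` (with `C⁰ = skip`). -/
def Cmd.pow {V : Type} (C : Cmd V) : ℕ → Cmd V
  | 0 => .skip
  | k + 1 => .seq C (C.pow k)

/-! ## Deterministic assertions -/

inductive AExpL (V L : Type) where
  | const : ℤ → AExpL V L
  | pvar : V → AExpL V L
  | lvar : L → AExpL V L
  | add : AExpL V L → AExpL V L → AExpL V L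
  | sub : AExpL V L → AExpL V L → AExpL V L
  | mul : AExpL V L → AExpL V L → AExpL V L

def AExpL.eval {V L : Type} (I : L → ℤ) (S : DState V) : AExpL V L → ℤ
  | const n => n
  | pvar X => S X
  | lvar x => I x
  | add e1 e2 => e1.eval I S + e2.eval I S
  | sub e1 e2 => e1.eval I S - e2.eval I S
  | mul e1 e2 => e1.eval I S * e2.eval I S

def AExp.toL {V L : Type} : AExp V → AExpL V L
  | .const n => .const n
  | .pvar X => .pvar X
  | .add e1 e2 => .add e1.toL e2.toL
  | .sub e1 e2 => .sub e1.toL e2.toL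
  | .mul e1 e2 => .mul e1.toL e2.toL

/-- Deterministic assertions: first-order formulas over program and logical
variables (including, for the weakest preconditions of loops, countable
conjunctions `conj`). -/
inductive Assertion (V L : Type) where
  | tt : Assertion V L
  | ff : Assertion V L
  | le : AExpL V L → AExpL V L → Assertion V L
  | lt : AExpL V L → AExpL V L → Assertion V L
  | eq : AExpL V L → AExpL V L → Assertion V L
  | not : Assertion V L → Assertion V L
  | and : Assertion V L → Assertion V L → Assertion V L
  | all : L → Assertion V L → Assertion V L
  | conj : (ℕ → Assertion V L) → Assertion V L

def Assertion.or {V L : Type} (φ ψ : Assertion V L) : Assertion V L :=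
  (φ.not.and ψ.not).not

open Classical in
/-- satisfaction `S ⊨^I φ` of a deterministic assertion on a deterministic state. -/
def Assertion.sat {V L : Type} : Assertion V L → (L → ℤ) → DState V → Prop
  | tt, _, _ => True
  | ff, _, _ => False
  | le e1 e2, I, S => e1.eval I S ≤ e2.eval I S
  | lt e1 e2, I, S => e1.eval I S < e2.eval I S
  | eq e1 e2, I, S => e1.eval I S = e2.eval I S
  | not φ, I, S => ¬ φ.sat I S
  | and φ ψ, I, S => φ.sat I S ∧ ψ.sat I S
  | all x φ, I, S => ∀ n : ℤ, φ.sat (Function.update I x n) S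
  | conj f, I, S => ∀ k : ℕ, (f k).sat I S

open Classical in
noncomputable def AExpL.substP {V L : Type} (X : V) (E : AExp V) : AExpL V L → AExpL V L
  | const n => const n
  | pvar Y => if Y = X then E.toL else pvar Y
  | lvar x => lvar x
  | add e1 e2 => add (e1.substP X E) (e2.substP X E)
  | sub e1 e2 => sub (e1.substP X E) (e2.substP X E)
  | mul e1 e2 => mul (e1.substP X E) (e2.substP X E)

/-- substitution `φ[X/E]` of the arithmetic expression `E` for the program
variable `X`. -/
noncomputable def Assertion.substP {V L : Type} (X : V) (E : AExp V) :
    Assertion V L → Assertion V L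
  | tt => tt
  | ff => ff
  | le e1 e2 => le (e1.substP X E) (e2.substP X E)
  | lt e1 e2 => lt (e1.substP X E) (e2.substP X E)
  | eq e1 e2 => eq (e1.substP X E) (e2.substP X E)
  | not φ => not (φ.substP X E)
  | and φ ψ => and (φ.substP X E) (ψ.substP X E)
  | all x φ => all x (φ.substP X E)
  | conj f => conj (fun k => (f k).substP X E)

/-- the precondition `φ[X/k₁] ∧ … ∧ φ[X/kₙ]` of a probabilistic assignment. -/
noncomputable def pasPre {V L : Type} (φ : Assertion V L) (X : V)
    (l : List (NNReal × ℤ)) : Assertion V L :=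
  l.foldr (fun p acc => Assertion.and (φ.substP X (AExp.const p.2)) acc) Assertion.tt

def BExp.toAssertion {V L : Type} : BExp V → Assertion V L
  | tt => .tt
  | ff => .ff
  | le e1 e2 => .le e1.toL e2.toL
  | lt e1 e2 => .lt e1.toL e2.toL
  | eq e1 e2 => .eq e1.toL e2.toL
  | not b => .not b.toAssertion
  | and b1 b2 => .and b1.toAssertion b2.toAssertion

/-- `μ ⊨^I φ`: every support of the probabilistic state `μ` satisfies `φ`. -/
def PSat {V L : Type} (μ : PState V) (I : L → ℤ) (φ : Assertion V L) : Prop :=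
  ∀ S : DState V, μ S ≠ 0 → φ.sat I S

/-- validity `⊨ {φ} C {ψ}` of a Hoare triple with deterministic assertions. -/
def ValidD {V L : Type} (φ : Assertion V L) (C : Cmd V) (ψ : Assertion V L) : Prop :=
  ∀ (I : L → ℤ) (S : DState V), φ.sat I S → PSat (C.sem (pointDist S)) I ψ

/-! ## The proof system PHL_d -/

inductive Derivable {V L : Type} : Assertion V L → Cmd V → Assertion V L → Prop where
  | skip (φ : Assertion V L) : Derivable φ .skip φ
  | assign (φ : Assertion V L) (X : V) (E : AExp V) :
      Derivable (φ.substP X E) (.assign X E) φ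
  | passign (φ : Assertion V L) (X : V)
      (Rl : {l : List (NNReal × ℤ) // (l.map Prod.fst).sum = 1}) :
      Derivable (pasPre φ X Rl.1) (.passign X Rl) φ
  | seq {φ φ1 φ2 : Assertion V L} {C1 C2 : Cmd V} :
      Derivable φ C1 φ1 → Derivable φ1 C2 φ2 → Derivable φ (.seq C1 C2) φ2
  | ifte {φ ψ : Assertion V L} {B : BExp V} {C1 C2 : Cmd V} :
      Derivable (φ.and B.toAssertion) C1 ψ →
      Derivable (φ.and B.toAssertion.not) C2 ψ →
      Derivable φ (.ifte B C1 C2) ψ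
  | cons {φ' φ ψ ψ' : Assertion V L} {C : Cmd V} :
      (∀ (I : L → ℤ) (S : DState V), φ'.sat I S → φ.sat I S) →
      Derivable φ C ψ →
      (∀ (I : L → ℤ) (S : DState V), ψ.sat I S → ψ'.sat I S) →
      Derivable φ' C ψ'
  | and {φ1 φ2 ψ1 ψ2 : Assertion V L} {C : Cmd V} :
      Derivable φ1 C ψ1 → Derivable φ2 C ψ2 →
      Derivable (φ1.and φ2) C (ψ1.and ψ2)
  | or {φ1 φ2 ψ1 ψ2 : Assertion V L} {C : Cmd V} :
      Derivable φ1 C ψ1 → Derivable φ2 C ψ2 →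
      Derivable (φ1.or φ2) C (ψ1.or ψ2)
  | whileDo {φ : Assertion V L} {B : BExp V} {C : Cmd V} :
      Derivable (φ.and B.toAssertion) C φ →
      Derivable φ (.whileDo B C) (φ.and B.toAssertion.not)

/-! ## Weakest preconditions for deterministic assertions -/

noncomputable def wp {V L : Type} : Cmd V → Assertion V L → Assertion V L
  | .skip, φ => φ
  | .assign X E, φ => φ.substP X E
  | .passign X Rl, φ => pasPre φ X Rl.1
  | .seq C1 C2, φ => wp C1 (wp C2 φ)
  | .ifte B C1 C2, φ =>
      (B.toAssertion.and (wp C1 φ)).or (B.toAssertion.not.and (wp C2 φ))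
  | .whileDo B C, φ => .conj (fun k =>
      Nat.rec (motive := fun _ => Assertion V L) Assertion.tt
        (fun _ ψk => (B.toAssertion.and (wp C ψk)).or (B.toAssertion.not.and φ)) k)
termination_by C _ => sizeOf C

/-! ## Real expressions and weakest preterms -/

/-- Real expressions (terms): real constants, real variables, probabilities of
deterministic assertions, arithmetic combinations, and (semantically
interpreted) countable sums. -/
inductive RExp (V L R : Type) where
  | const : ℝ → RExp V L R
  | rvar : R → RExp V L R
  | prob : Assertion V L → RExp V L R
  | add : RExp V L R → RExp V L R → RExp V L R
  | sub : RExp V L R → RExp V L R → RExp V L R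
  | mul : RExp V L R → RExp V L R → RExp V L R
  | infsum : (ℕ → RExp V L R) → RExp V L R

noncomputable def RExp.eval {V L R : Type} (IL : L → ℤ) (IR : R → ℝ) (μ : PState V) :
    RExp V L R → ℝ
  | const a => a
  | rvar x => IR x
  | prob φ => (∑' S : {S : DState V // φ.sat IL S}, μ S.1).toReal
  | add r1 r2 => r1.eval IL IR μ + r2.eval IL IR μ
  | sub r1 r2 => r1.eval IL IR μ - r2.eval IL IR μ
  | mul r1 r2 => r1.eval IL IR μ * r2.eval IL IR μ
  | infsum f => ∑' k : ℕ, (f k).eval IL IR μ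

/-- the conditional term `r/B`. -/
def RExp.cond {V L R : Type} (B : Assertion V L) : RExp V L R → RExp V L R
  | const a => const a
  | rvar x => rvar x
  | prob φ => prob (φ.and B)
  | add r1 r2 => add (r1.cond B) (r2.cond B)
  | sub r1 r2 => sub (r1.cond B) (r2.cond B)
  | mul r1 r2 => mul (r1.cond B) (r2.cond B)
  | infsum f => infsum (fun k => (f k).cond B)

open Classical in
/-- restriction `↓_B μ` of a probabilistic state to the states satisfying the
deterministic assertion `B` (under the interpretation `I`). -/
noncomputable def aRestrict {V L : Type} (I : L → ℤ) (B : Assertion V L) (μ : PState V) :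
    PState V :=
  fun S => if B.sat I S then μ S else 0

/-- homomorphic extension of an action on probability atoms to all real
expressions. -/
def homExt {V L R : Type} (h : Assertion V L → RExp V L R) : RExp V L R → RExp V L R
  | .const a => .const a
  | .rvar x => .rvar x
  | .prob φ => h φ
  | .add r1 r2 => .add (homExt h r1) (homExt h r2)
  | .sub r1 r2 => .sub (homExt h r1) (homExt h r2)
  | .mul r1 r2 => .mul (homExt h r1) (homExt h r2)
  | .infsum f => .infsum (fun k => homExt h (f k))

/-- the finite conjunction `f 0 ∧ … ∧ f (n-1)`. -/
def finConj {V L : Type} : ℕ → (ℕ → Assertion V L) → Assertion V L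
  | 0, _ => .tt
  | k + 1, f => (finConj k f).and (f k)

/-- the assertion `wp(i) = ¬wp(C⁰,¬B) ∧ … ∧ ¬wp(C^{i-1},¬B) ∧ wp(Cⁱ,¬B)`. -/
noncomputable def wpN {V L : Type} (B : BExp V) (C : Cmd V) (i : ℕ) : Assertion V L :=
  (finConj i (fun j => (wp (C.pow j) B.toAssertion.not).not)).and
    (wp (C.pow i) B.toAssertion.not)

/-- the assertion `wp(∞) = ⋀_{i≥0} ¬wp(Cⁱ,¬B)`. -/
noncomputable def wpInf {V L : Type} (B : BExp V) (C : Cmd V) : Assertion V L :=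
  .conj (fun i => (wp (C.pow i) B.toAssertion.not).not)

open Classical in
/-- the weakest preterm of a probability atom `P(φ)` for the probabilistic
assignment `X ←$ l`: the sum over nonempty subsets `T` of the indices of
`(Σ_{i∈T} aᵢ) · P(⋀_{i∈T} φ[X/kᵢ] ∧ ⋀_{j∉T} ¬φ[X/kⱼ])`. -/
noncomputable def ptPAS {V L R : Type} (X : V) (l : List (NNReal × ℤ))
    (φ : Assertion V L) : RExp V L R :=
  (((Finset.univ : Finset (Finset (Fin l.length))).filter Finset.Nonempty).toList).foldr
    (fun T acc => RExp.add
      (RExp.mul (RExp.const (∑ i ∈ T, ((l.get i).1 : ℝ)))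
        (RExp.prob (finConj l.length (fun j =>
          if h : j < l.length then
            (if (⟨j, h⟩ : Fin l.length) ∈ T then
              φ.substP X (AExp.const (l.get ⟨j, h⟩).2)
            else
              (φ.substP X (AExp.const (l.get ⟨j, h⟩).2)).not)
          else Assertion.tt))))
      acc)
    (RExp.const 0)

open Classical in
/-- the weakest preterm of a probability atom `P(φ)` with respect to a
command. -/
noncomputable def ptProb {V L R : Type} : Cmd V → Assertion V L → RExp V L R
  | .skip, φ => .prob φ
  | .assign X E, φ => .prob (φ.substP X E)
  | .passign X Rl, φ => ptPAS X Rl.1 φ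
  | .seq C1 C2, φ => homExt (fun ψ => ptProb C1 ψ) (ptProb C2 φ)
  | .ifte B C1 C2, φ =>
      .add ((ptProb C1 φ).cond B.toAssertion) ((ptProb C2 φ).cond B.toAssertion.not)
  | .whileDo B C, φ =>
      -- `g` is the preterm transformer of `IF = if B then C else skip`
      let g : RExp V L R → RExp V L R := fun r =>
        .add ((homExt (fun ψ => ptProb C ψ) r).cond B.toAssertion)
          (r.cond B.toAssertion.not)
      -- `SUM = Σ_{i=0}^∞ P(wp(i)) · (pt(IFⁱ, P(φ)) / wp(i))`
      let SUM : RExp V L R := .infsum (fun i =>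
        .mul (.prob (wpN B C i)) ((g^[i] (.prob φ)).cond (wpN B C i)))
      -- `f r = pt(C, r) / wp(∞)`
      let f : RExp V L R → RExp V L R := fun r =>
        (homExt (fun ψ => ptProb C ψ) r).cond (wpInf B C)
      -- `Σ_{i=0}^∞ Tᵢ` with `Tᵢ = fⁱ(SUM) · ∏_{j<i} fʲ(P(wp(∞)))`
      .infsum (fun i =>
        .mul (f^[i] SUM)
          ((List.range i).foldr
            (fun j acc => .mul (f^[j] (.prob (wpInf B C))) acc) (.const 1)))
termination_by C _ => sizeOf C

/-- the weakest preterm `pt(C, r)`. -/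
noncomputable def pt {V L R : Type} (C : Cmd V) : RExp V L R → RExp V L R :=
  homExt (fun φ => ptProb C φ)

/-! ## Probabilistic formulas -/

inductive PFormula (V L R : Type) where
  | le : RExp V L R → RExp V L R → PFormula V L R
  | lt : RExp V L R → RExp V L R → PFormula V L R
  | eq : RExp V L R → RExp V L R → PFormula V L R
  | not : PFormula V L R → PFormula V L R
  | and : PFormula V L R → PFormula V L R → PFormula V L R

noncomputable def PFormula.sat {V L R : Type} (IL : L → ℤ) (IR : R → ℝ) (μ : PState V) :
    PFormula V L R → Prop
  | le r1 r2 => r1.eval IL IR μ ≤ r2.eval IL IR μ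
  | lt r1 r2 => r1.eval IL IR μ < r2.eval IL IR μ
  | eq r1 r2 => r1.eval IL IR μ = r2.eval IL IR μ
  | not Φ => ¬ Φ.sat IL IR μ
  | and Φ Ψ => Φ.sat IL IR μ ∧ Ψ.sat IL IR μ

/-- the weakest precondition of a probabilistic assertion. -/
noncomputable def WP {V L R : Type} (C : Cmd V) : PFormula V L R → PFormula V L R
  | .le r1 r2 => .le (pt C r1) (pt C r2)
  | .lt r1 r2 => .lt (pt C r1) (pt C r2)
  | .eq r1 r2 => .eq (pt C r1) (pt C r2)
  | .not Φ => .not (WP C Φ)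
  | .and Φ Ψ => .and (WP C Φ) (WP C Ψ)

/-- validity `⊨ {Φ} C {Ψ}` of a Hoare triple with probabilistic assertions. -/
def ValidP {V L R : Type} (Φ : PFormula V L R) (C : Cmd V) (Ψ : PFormula V L R) : Prop :=
  ∀ (IL : L → ℤ) (IR : R → ℝ) (μ : PState V), IsSubDist μ →
    Φ.sat IL IR μ → Ψ.sat IL IR (C.sem μ)

/-! ## The proof system of PHL with probabilistic assertions -/

inductive PDerivable {V L R : Type} : PFormula V L R → Cmd V → PFormula V L R → Prop where
  | skip (Φ : PFormula V L R) : PDerivable Φ .skip Φ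
  | assign (Φ : PFormula V L R) (X : V) (E : AExp V) :
      PDerivable (WP (.assign X E) Φ) (.assign X E) Φ
  | passign (Φ : PFormula V L R) (X : V)
      (Rl : {l : List (NNReal × ℤ) // (l.map Prod.fst).sum = 1}) :
      PDerivable (WP (.passign X Rl) Φ) (.passign X Rl) Φ
  | ifte (Φ : PFormula V L R) (B : BExp V) (C1 C2 : Cmd V) :
      PDerivable (WP (.ifte B C1 C2) Φ) (.ifte B C1 C2) Φ
  | whileDo (Φ : PFormula V L R) (B : BExp V) (C : Cmd V) :
      PDerivable (WP (.whileDo B C) Φ) (.whileDo B C) Φ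
  | seq {Φ Φ1 Φ2 : PFormula V L R} {C1 C2 : Cmd V} :
      PDerivable Φ C1 Φ1 → PDerivable Φ1 C2 Φ2 → PDerivable Φ (.seq C1 C2) Φ2
  | cons {Φ' Φ Ψ Ψ' : PFormula V L R} {C : Cmd V} :
      (∀ (IL : L → ℤ) (IR : R → ℝ) (μ : PState V), IsSubDist μ →
        Φ'.sat IL IR μ → Φ.sat IL IR μ) →
      PDerivable Φ C Ψ →
      (∀ (IL : L → ℤ) (IR : R → ℝ) (μ : PState V), IsSubDist μ →
        Ψ.sat IL IR μ → Ψ'.sat IL IR μ) →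
      PDerivable Φ' C Ψ'


/-! ## Auxiliary lemmas -/

lemma eval_toL {V L : Type} (E : AExp V) (I : L → ℤ) (S : DState V) :
    (E.toL : AExpL V L).eval I S = E.eval S := by
  induction E <;> simp [AExp.toL, AExpL.eval, AExp.eval, *]

open Classical in
lemma subst_aexp {V L : Type} (X : V) (E : AExp V) (e : AExpL V L) (I : L → ℤ)
    (S : DState V) :
    (e.substP X E).eval I S = e.eval I (Function.update S X (E.eval S)) := by
  induction e with
  | const n => simp [AExpL.substP, AExpL.eval]
  | pvar Y =>
      by_cases h : Y = X
      · subst h; simp [AExpL.substP, AExpL.eval, eval_toL]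
      · simp [AExpL.substP, if_neg h, AExpL.eval, Function.update_of_ne h]
  | lvar x => simp [AExpL.substP, AExpL.eval]
  | add e1 e2 ih1 ih2 => simp [AExpL.substP, AExpL.eval, ih1, ih2]
  | sub e1 e2 ih1 ih2 => simp [AExpL.substP, AExpL.eval, ih1, ih2]
  | mul e1 e2 ih1 ih2 => simp [AExpL.substP, AExpL.eval, ih1, ih2]

open Classical in
lemma subst_sat {V L : Type} (X : V) (E : AExp V) (φ : Assertion V L) :
    ∀ (I : L → ℤ) (S : DState V),
      (φ.substP X E).sat I S ↔ φ.sat I (Function.update S X (E.eval S)) := by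
  induction φ <;> intro I S <;>
    simp [Assertion.substP, Assertion.sat, subst_aexp, *]

lemma sat_or {V L : Type} (φ ψ : Assertion V L) (I : L → ℤ) (S : DState V) :
    (φ.or ψ).sat I S ↔ φ.sat I S ∨ ψ.sat I S := by
  simp [Assertion.or, Assertion.sat]; tauto

lemma sat_B {V L : Type} (B : BExp V) (I : L → ℤ) (S : DState V) :
    (B.toAssertion : Assertion V L).sat I S ↔ B.holds S := by
  induction B <;> simp [BExp.toAssertion, Assertion.sat, BExp.holds, eval_toL, *]

lemma pasPre_sat {V L : Type} (φ : Assertion V L) (X : V) (l : List (NNReal × ℤ))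
    (I : L → ℤ) (S : DState V) :
    (pasPre φ X l).sat I S ↔ ∀ p ∈ l, (φ.substP X (AExp.const p.2)).sat I S := by
  induction l with
  | nil => simp [pasPre, Assertion.sat]
  | cons p l ih => simp [pasPre, Assertion.sat] at ih ⊢; tauto

/-- The loop approximants `ψ_k`. -/
noncomputable def loopA {V L : Type} (B : BExp V) (C : Cmd V) (φ : Assertion V L) :
    ℕ → Assertion V L
  | 0 => .tt
  | k + 1 => (B.toAssertion.and (wp C (loopA B C φ k))).or (B.toAssertion.not.and φ)

lemma wp_while {V L : Type} (B : BExp V) (C : Cmd V) (φ : Assertion V L) :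
    wp (.whileDo B C) φ = .conj (loopA B C φ) := by
  rw [wp]
  congr 1
  funext k
  induction k with
  | zero => rfl
  | succ k ih => simp only [loopA]; rw [ih]

lemma wp_congr {V L : Type} (C : Cmd V) :
    ∀ (φ ψ : Assertion V L), (∀ I S, φ.sat I S ↔ ψ.sat I S) →
      ∀ (I : L → ℤ) (S : DState V), (wp C φ).sat I S ↔ (wp C ψ).sat I S := by
  induction C with
  | skip => intro φ ψ h I S; simpa [wp] using h I S
  | assign X E =>
      intro φ ψ h I S; simp only [wp, subst_sat]; exact h _ _
  | passign X Rl =>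
      intro φ ψ h I S
      simp only [wp, pasPre_sat, subst_sat]
      exact forall_congr' fun p => forall_congr' fun _ => h _ _
  | seq C1 C2 ih1 ih2 =>
      intro φ ψ h I S
      simp only [wp]
      exact ih1 _ _ (fun I S => ih2 _ _ h I S) I S
  | ifte B C1 C2 ih1 ih2 =>
      intro φ ψ h I S
      simp only [wp, sat_or, Assertion.sat]
      rw [ih1 _ _ h, ih2 _ _ h]
  | whileDo B C ih =>
      intro φ ψ h I S
      rw [wp_while, wp_while]
      simp only [Assertion.sat]
      have key : ∀ k I S, (loopA B C φ k).sat I S ↔ (loopA B C ψ k).sat I S := by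
        intro k
        induction k with
        | zero => intro I S; simp [loopA]
        | succ k ihk =>
            intro I S
            simp only [loopA, sat_or, Assertion.sat]
            rw [ih _ _ ihk, h]
      exact forall_congr' fun k => key k I S

lemma wp_conj {V L : Type} (C : Cmd V) :
    ∀ (f : ℕ → Assertion V L) (I : L → ℤ) (S : DState V),
      (wp C (.conj f)).sat I S ↔ ∀ k, (wp C (f k)).sat I S := by
  induction C with
  | skip => intro f I S; simp [wp, Assertion.sat]
  | assign X E =>
      intro f I S; simp only [wp, subst_sat]; simp [Assertion.sat]
  | passign X Rl =>
      intro f I S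
      simp only [wp, pasPre_sat, subst_sat]
      simp only [Assertion.sat]
      exact ⟨fun h k p hp => h p hp k, fun h p hp k => h k p hp⟩
  | seq C1 C2 ih1 ih2 =>
      intro f I S
      simp only [wp]
      rw [wp_congr C1 _ (.conj fun k => wp C2 (f k))
        (fun I S => by simpa [Assertion.sat] using ih2 f I S)]
      exact ih1 _ I S
  | ifte B C1 C2 ih1 ih2 =>
      intro f I S
      simp only [wp, sat_or, Assertion.sat, ih1, ih2]
      by_cases hB : (B.toAssertion : Assertion V L).sat I S <;> simp [hB]
  | whileDo B C ih =>
      intro f I S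
      simp only [wp_while, Assertion.sat]
      have key : ∀ k I S, (loopA B C (.conj f) k).sat I S ↔
          ∀ j, (loopA B C (f j) k).sat I S := by
        intro k
        induction k with
        | zero => intro I S; simp [loopA, Assertion.sat]
        | succ k ihk =>
            intro I S
            simp only [loopA, sat_or, Assertion.sat]
            rw [wp_congr C _ (.conj fun j => loopA B C (f j) k)
              (fun I S => by simpa [Assertion.sat] using ihk I S), ih]
            by_cases hB : (B.toAssertion : Assertion V L).sat I S <;> simp [hB]
      constructor
      · intro h j k; exact (key k I S).1 (h k) j
      · intro h k; exact (key k I S).2 fun j => h j k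
/-- Derivability of weakest preconditions in PHL_d: for every
command `C` and deterministic assertion `φ`, the triple `{wp(C,φ)} C {φ}` is
derivable. -/
theorem wp_derivable {V L : Type} (C : Cmd V) (φ : Assertion V L) :
    Derivable (wp C φ) C φ := by
  induction C generalizing φ with
  | skip => simp only [wp]; exact Derivable.skip φ
  | assign X E => simp only [wp]; exact Derivable.assign φ X E
  | passign X Rl => simp only [wp]; exact Derivable.passign φ X Rl
  | seq C1 C2 ih1 ih2 =>
      exact Derivable.seq (by simpa [wp] using ih1 (wp C2 φ)) (ih2 φ)
  | ifte B C1 C2 ih1 ih2 =>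
      refine Derivable.ifte ?_ ?_
      · refine Derivable.cons ?_ (ih1 φ) (fun _ _ h => h)
        intro I S h
        rcases h with ⟨h1, hB⟩
        simp only [wp, sat_or, Assertion.sat] at h1
        rcases h1 with ⟨_, h⟩ | ⟨hnB, _⟩
        · exact h
        · exact absurd hB hnB
      · refine Derivable.cons ?_ (ih2 φ) (fun _ _ h => h)
        intro I S h
        rcases h with ⟨h1, hnB⟩
        simp only [wp, sat_or, Assertion.sat] at h1
        rcases h1 with ⟨hB, _⟩ | ⟨_, h⟩
        · exact absurd hB hnB
        · exact h
  | whileDo B C ih =>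
      rw [wp_while]
      have body : Derivable ((Assertion.conj (loopA B C φ)).and B.toAssertion) C
          (Assertion.conj (loopA B C φ)) := by
        refine Derivable.cons ?_ (ih (.conj (loopA B C φ))) (fun _ _ h => h)
        intro I S h
        rcases h with ⟨hconj, hB⟩
        rw [wp_conj]
        intro k
        rcases (sat_or _ _ I S).1 (hconj (k + 1)) with ⟨_, h⟩ | ⟨hnB, _⟩
        · exact h
        · exact absurd hB hnB
      refine Derivable.cons (fun _ _ h => h) (Derivable.whileDo body) ?_
      intro I S h
      rcases h with ⟨hconj, hnB⟩
      rcases (sat_or _ _ I S).1 (hconj 1) with ⟨hB, _⟩ | ⟨_, h⟩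
      · exact absurd hB hnB
      · exact h
end

section
/- While/If unfolding lemma: for every i ≥ 0, Boolean expression B, command C, and deterministic state S, if S ⊨ ¬wp(C⁰,¬B) ∧ … ∧ ¬wp(C^{i−1},¬B) ∧ wp(Cⁱ,¬B) (where Cᵏ denotes the k-fold sequential composition of C, C⁰ = skip), then ⟦while B do C⟧(μ_S) = ⟦(if B then C else skip)ⁱ⟧(μ_S). -/
open scoped ENNReal

/-! ## Auxiliary lemmas -/

section Aux

open Classical

variable {V L : Type}

lemma aux_toL_eval (I : L → ℤ) (S : DState V) (E : AExp V) :
    (AExp.toL (L := L) E).eval I S = E.eval S := by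
  induction E <;> simp [AExp.toL, AExp.eval, AExpL.eval, *]

lemma aux_toAssertion_sat (I : L → ℤ) (S : DState V) (B : BExp V) :
    (BExp.toAssertion (L := L) B).sat I S ↔ B.holds S := by
  induction B <;> simp [BExp.toAssertion, BExp.holds, Assertion.sat, aux_toL_eval, *]

lemma aux_or_sat (φ ψ : Assertion V L) (I : L → ℤ) (S : DState V) :
    (φ.or ψ).sat I S ↔ φ.sat I S ∨ ψ.sat I S := by
  simp [Assertion.or, Assertion.sat]; tauto

lemma aux_substP_eval (X : V) (E : AExp V) (I : L → ℤ) (S : DState V) (e : AExpL V L) :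
    (e.substP X E).eval I S = e.eval I (Function.update S X (E.eval S)) := by
  induction e with
  | pvar Y =>
      by_cases hYX : Y = X
      · subst hYX; simp [AExpL.substP, AExpL.eval, aux_toL_eval]
      · simp [AExpL.substP, hYX, AExpL.eval, Function.update_apply]
  | _ => simp [AExpL.substP, AExpL.eval, *]

lemma aux_substP_sat (X : V) (E : AExp V) (φ : Assertion V L) :
    ∀ (I : L → ℤ) (S : DState V),
      (φ.substP X E).sat I S ↔ φ.sat I (Function.update S X (E.eval S)) := by
  induction φ <;> intro I S <;>
    simp [Assertion.substP, Assertion.sat, aux_substP_eval, *]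

lemma aux_pasPre_sat {X : V} {l : List (NNReal × ℤ)} {φ : Assertion V L}
    {I : L → ℤ} {S : DState V} {p : NNReal × ℤ} (hp : p ∈ l)
    (h : (pasPre φ X l).sat I S) : (φ.substP X (AExp.const p.2)).sat I S := by
  induction l with
  | nil => simp at hp
  | cons q l ih =>
      simp only [pasPre, List.foldr_cons, Assertion.sat] at h
      rcases List.mem_cons.1 hp with rfl | hp
      · exact h.1
      · exact ih hp h.2

lemma aux_pointDist_ne_zero {S S' : DState V} : pointDist S S' ≠ 0 ↔ S' = S := by
  simp [pointDist]

lemma aux_detAssign_support {X : V} {f : DState V → ℤ} {μ : PState V} {S' : DState V}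
    (h : detAssign X f μ S' ≠ 0) :
    ∃ S0, μ S0 ≠ 0 ∧ S' = Function.update S0 X (f S0) := by
  by_contra hc
  push_neg at hc
  apply h
  rw [detAssign, ENNReal.tsum_eq_zero]
  intro S0
  by_cases h0 : μ S0 = 0
  · simp [h0]
  · have := hc S0 h0
    simp [pointDist, this]


lemma aux_dRestrict_zero (B : BExp V) : dRestrict B (0 : PState V) = 0 := by
  funext T; simp [dRestrict]

lemma aux_dRestrict_mono (B : BExp V) {μ ν : PState V} (h : μ ≤ ν) :
    dRestrict B μ ≤ dRestrict B ν := by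
  intro T; by_cases hb : B.holds T <;> simp [dRestrict, hb, h T]

lemma aux_dRestrict_le (B : BExp V) (μ : PState V) : dRestrict B μ ≤ μ := by
  intro T; by_cases hb : B.holds T <;> simp [dRestrict, hb]

lemma aux_detAssign_zero (X : V) (f : DState V → ℤ) :
    detAssign X f (0 : PState V) = 0 := by
  funext S'; simp [detAssign]

lemma aux_detAssign_mono (X : V) (f : DState V → ℤ) {μ ν : PState V} (h : μ ≤ ν) :
    detAssign X f μ ≤ detAssign X f ν := by
  intro S'
  exact ENNReal.tsum_le_tsum fun S0 => mul_le_mul_left (h S0) _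

lemma aux_sem_zero (C : Cmd V) : C.sem (0 : PState V) = 0 := by
  induction C with
  | skip => simp [Cmd.sem]
  | assign X E => simp [Cmd.sem, aux_detAssign_zero]
  | passign X Rl =>
      funext S'
      simp only [Cmd.sem, aux_detAssign_zero]
      rw [List.sum_eq_zero]
      · rfl
      · intro x hx
        simp only [List.mem_map] at hx
        obtain ⟨p, _, rfl⟩ := hx
        simp
  | seq C1 C2 ih1 ih2 => simp [Cmd.sem, ih1, ih2]
  | ifte B C1 C2 ih1 ih2 =>
      funext S'
      simp [Cmd.sem, aux_dRestrict_zero, ih1, ih2]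
  | whileDo B C ih =>
      funext S'
      simp only [Cmd.sem]
      have hiter : ∀ k, (fun ν => C.sem (dRestrict B ν))^[k] (0 : PState V) = 0 := by
        intro k
        induction k with
        | zero => rfl
        | succ k ihk => rw [Function.iterate_succ_apply, aux_dRestrict_zero, ih, ihk]
      simp [hiter, aux_dRestrict_zero]

lemma aux_sem_mono (C : Cmd V) : ∀ {μ ν : PState V}, μ ≤ ν → C.sem μ ≤ C.sem ν := by
  induction C with
  | skip => intro μ ν h; simpa [Cmd.sem] using h
  | assign X E => intro μ ν h; simpa [Cmd.sem] using aux_detAssign_mono X _ h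
  | passign X Rl =>
      intro μ ν h S'
      simp only [Cmd.sem]
      apply List.sum_le_sum
      intro p _
      exact mul_le_mul_right (aux_detAssign_mono X _ h S') _
  | seq C1 C2 ih1 ih2 => intro μ ν h; simp only [Cmd.sem]; exact ih2 (ih1 h)
  | ifte B C1 C2 ih1 ih2 =>
      intro μ ν h S'
      simp only [Cmd.sem]
      exact add_le_add (ih1 (aux_dRestrict_mono B h) S')
        (ih2 (aux_dRestrict_mono _ h) S')
  | whileDo B C ih =>
      intro μ ν h S'
      simp only [Cmd.sem]
      apply ENNReal.tsum_le_tsum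
      intro k
      have hiter : ∀ k, (fun ρ => C.sem (dRestrict B ρ))^[k] μ ≤
          (fun ρ => C.sem (dRestrict B ρ))^[k] ν := by
        intro k
        induction k with
        | zero => exact h
        | succ k ihk =>
            rw [Function.iterate_succ_apply', Function.iterate_succ_apply']
            exact ih (aux_dRestrict_mono B ihk)
      exact aux_dRestrict_mono _ (hiter k) S'

lemma aux_pow_sem (D : Cmd V) : ∀ (k : ℕ) (μ : PState V),
    (D.pow k).sem μ = (D.sem)^[k] μ := by
  intro k
  induction k with
  | zero => intro μ; simp [Cmd.pow, Cmd.sem]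
  | succ k ihk =>
      intro μ
      simp only [Cmd.pow, Cmd.sem]
      rw [ihk]
      exact (Function.iterate_succ_apply _ _ _).symm


lemma aux_wp_sound (C : Cmd V) : ∀ (φ : Assertion V L) (I : L → ℤ) (μ : PState V),
    PSat μ I (wp C φ) → PSat (C.sem μ) I φ := by
  induction C with
  | skip => intro φ I μ h; simpa [wp, Cmd.sem] using h
  | assign X E =>
      intro φ I μ h S' hne
      simp only [Cmd.sem] at hne
      obtain ⟨S0, h0, rfl⟩ := aux_detAssign_support hne
      have hs := h S0 h0
      simp only [wp] at hs
      exact (aux_substP_sat X E φ I S0).1 hs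
  | passign X Rl =>
      intro φ I μ h S' hne
      simp only [Cmd.sem] at hne
      obtain ⟨x, hx, hxne⟩ : ∃ x ∈ Rl.1.map
          (fun p => (p.1 : ℝ≥0∞) * detAssign X (fun _ => p.2) μ S'), x ≠ 0 := by
        by_contra hc
        push_neg at hc
        exact hne (List.sum_eq_zero hc)
      simp only [List.mem_map] at hx
      obtain ⟨p, hp, rfl⟩ := hx
      have hd : detAssign X (fun _ => p.2) μ S' ≠ 0 := by
        intro h0; exact hxne (by rw [h0, mul_zero])
      obtain ⟨S0, h0, rfl⟩ := aux_detAssign_support hd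
      have hs := h S0 h0
      simp only [wp] at hs
      have := aux_pasPre_sat hp hs
      exact (aux_substP_sat X (AExp.const p.2) φ I S0).1 this
  | seq C1 C2 ih1 ih2 =>
      intro φ I μ h
      simp only [Cmd.sem]
      apply ih2
      apply ih1
      simpa only [wp] using h
  | ifte B C1 C2 ih1 ih2 =>
      intro φ I μ h S' hne
      simp only [Cmd.sem] at hne
      have hne' : C1.sem (dRestrict B μ) S' ≠ 0 ∨
          C2.sem (dRestrict (BExp.not B) μ) S' ≠ 0 := by
        by_contra hc
        push_neg at hc
        exact hne (by rw [hc.1, hc.2, add_zero])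
      rcases hne' with hne1 | hne2
      · refine ih1 φ I (dRestrict B μ) ?_ S' hne1
        intro S0 h0
        have hb : B.holds S0 ∧ μ S0 ≠ 0 := by
          by_cases hB : B.holds S0
          · exact ⟨hB, by simpa [dRestrict, hB] using h0⟩
          · exact absurd (by simp [dRestrict, hB]) h0
        have hs := h S0 hb.2
        simp only [wp] at hs
        rcases (aux_or_sat _ _ _ _).1 hs with hl | hr
        · exact hl.2
        · exact absurd ((aux_toAssertion_sat I S0 B).2 hb.1) hr.1
      · refine ih2 φ I (dRestrict (BExp.not B) μ) ?_ S' hne2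
        intro S0 h0
        have hb : ¬ B.holds S0 ∧ μ S0 ≠ 0 := by
          by_cases hB : B.holds S0
          · exact absurd (by simp [dRestrict, BExp.holds, hB]) h0
          · exact ⟨hB, by simpa [dRestrict, BExp.holds, hB] using h0⟩
        have hs := h S0 hb.2
        simp only [wp] at hs
        rcases (aux_or_sat _ _ _ _).1 hs with hl | hr
        · exact absurd ((aux_toAssertion_sat I S0 B).1 hl.1) hb.1
        · exact hr.2
  | whileDo B C ih =>
      intro φ I μ h S' hne
      simp only [Cmd.sem] at hne
      set ψ : ℕ → Assertion V L := fun k =>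
        Nat.rec (motive := fun _ => Assertion V L) Assertion.tt
          (fun _ ψk => ((BExp.toAssertion B).and (wp C ψk)).or
            ((BExp.toAssertion B).not.and φ)) k with hψ
      have hψsucc : ∀ k, ψ (k + 1) = ((BExp.toAssertion B).and (wp C (ψ k))).or
          ((BExp.toAssertion B).not.and φ) := fun k => rfl
      have hconj : ∀ (ν : PState V), PSat ν I (wp (Cmd.whileDo B C) φ) →
          ∀ k, PSat ν I (ψ k) := by
        intro ν hv k S0 h0
        have := hv S0 h0
        simp only [wp, Assertion.sat] at this
        exact this k
      obtain ⟨k, hk⟩ : ∃ k, dRestrict (BExp.not B)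
          ((fun ν => C.sem (dRestrict B ν))^[k] μ) S' ≠ 0 := by
        by_contra hc
        push_neg at hc
        exact hne (by simp [hc])
      have claim : ∀ k (ν : PState V) (S' : DState V), PSat ν I (ψ (k + 1)) →
          dRestrict (BExp.not B) ((fun ρ => C.sem (dRestrict B ρ))^[k] ν) S' ≠ 0 →
          φ.sat I S' := by
        intro k
        induction k with
        | zero =>
            intro ν S' hv h0
            simp only [Function.iterate_zero, id] at h0
            have hb : ¬ B.holds S' ∧ ν S' ≠ 0 := by
              by_cases hB : B.holds S'
              · exact absurd (by simp [dRestrict, BExp.holds, hB]) h0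
              · exact ⟨hB, by simpa [dRestrict, BExp.holds, hB] using h0⟩
            have hs := hv S' hb.2
            rw [hψsucc 0] at hs
            rcases (aux_or_sat _ _ _ _).1 hs with hl | hr
            · exact absurd ((aux_toAssertion_sat I S' B).1 hl.1) hb.1
            · exact hr.2
        | succ k ihk =>
            intro ν S' hv h0
            rw [Function.iterate_succ_apply] at h0
            refine ihk (C.sem (dRestrict B ν)) S' ?_ h0
            apply ih
            intro S0 hS0
            have hb : B.holds S0 ∧ ν S0 ≠ 0 := by
              by_cases hB : B.holds S0
              · exact ⟨hB, by simpa [dRestrict, hB] using hS0⟩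
              · exact absurd (by simp [dRestrict, hB]) hS0
            have hs := hv S0 hb.2
            rw [hψsucc (k + 1)] at hs
            rcases (aux_or_sat _ _ _ _).1 hs with hl | hr
            · exact hl.2
            · exact absurd ((aux_toAssertion_sat I S0 B).2 hb.1) hr.1
      exact claim k μ S' (hconj μ h (k + 1)) hk

end Aux


/-- While/If unfolding lemma: if
`S ⊨ ¬wp(C⁰,¬B) ∧ … ∧ ¬wp(C^{i−1},¬B) ∧ wp(Cⁱ,¬B)` then
`⟦while B do C⟧(μ_S) = ⟦(if B then C else skip)ⁱ⟧(μ_S)`. -/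
theorem while_if_unfold {V L : Type} (i : ℕ) (B : BExp V) (C : Cmd V) (S : DState V)
    (h : ∀ I : L → ℤ,
      (∀ j < i, ¬ (wp (C.pow j) (BExp.toAssertion B).not).sat I S) ∧
      (wp (C.pow i) ((BExp.toAssertion B : Assertion V L).not)).sat I S) :
    (Cmd.whileDo B C).sem (pointDist S) = ((Cmd.ifte B C .skip).pow i).sem (pointDist S) := by
  classical
  set I : L → ℤ := fun _ => 0 with hI
  -- the iterates of `λν. ⟦C⟧(↓_B ν)` starting from the point distribution
  have hPSat0 : PSat (pointDist S) I (wp (C.pow i) (BExp.toAssertion B).not) := by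
    intro S0 h0
    rw [aux_pointDist_ne_zero.1 h0]
    exact (h I).2
  have hsem : PSat ((C.pow i).sem (pointDist S)) I (BExp.toAssertion B).not :=
    aux_wp_sound (C.pow i) _ I _ hPSat0
  -- F^[k] ≤ ⟦C⟧^[k]
  have hleF : ∀ (k : ℕ) (μ : PState V),
      (fun ρ => C.sem (dRestrict B ρ))^[k] μ ≤ (C.sem)^[k] μ := by
    intro k
    induction k with
    | zero => intro μ; exact le_rfl
    | succ k ihk =>
        intro μ
        rw [Function.iterate_succ_apply, Function.iterate_succ_apply]
        calc (fun ρ => C.sem (dRestrict B ρ))^[k] (C.sem (dRestrict B μ))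
            ≤ (C.sem)^[k] (C.sem (dRestrict B μ)) := ihk _
          _ ≤ (C.sem)^[k] (C.sem μ) := by
              have hmono : ∀ (j : ℕ) (μ ν : PState V), μ ≤ ν →
                  (C.sem)^[j] μ ≤ (C.sem)^[j] ν := by
                intro j
                induction j with
                | zero => intro μ ν hμν; exact hμν
                | succ j ihj =>
                    intro μ ν hμν
                    rw [Function.iterate_succ_apply, Function.iterate_succ_apply]
                    exact ihj _ _ (aux_sem_mono C hμν)
              exact hmono k _ _ (aux_sem_mono C (aux_dRestrict_le B μ))
  -- the i-th iterate is supported on ¬B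
  have hsupp : ∀ S', (fun ρ => C.sem (dRestrict B ρ))^[i] (pointDist S) S' ≠ 0 →
      ¬ B.holds S' := by
    intro S' hne
    have hle : (fun ρ => C.sem (dRestrict B ρ))^[i] (pointDist S) S' ≤
        (C.pow i).sem (pointDist S) S' := by
      rw [aux_pow_sem]
      exact hleF i (pointDist S) S'
    have hne2 : (C.pow i).sem (pointDist S) S' ≠ 0 := by
      intro h0
      exact hne (le_antisymm (h0 ▸ hle) zero_le)
    have hnot := hsem S' hne2
    intro hb
    exact hnot ((aux_toAssertion_sat I S' B).2 hb)
  have hrB : dRestrict B ((fun ρ => C.sem (dRestrict B ρ))^[i] (pointDist S)) = 0 := by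
    funext T
    by_cases hb : B.holds T
    · have : (fun ρ => C.sem (dRestrict B ρ))^[i] (pointDist S) T = 0 := by
        by_contra hc
        exact hsupp T hc hb
      simp [dRestrict, hb, this]
    · simp [dRestrict, hb]
  have hrNB : dRestrict (BExp.not B) ((fun ρ => C.sem (dRestrict B ρ))^[i] (pointDist S)) =
      (fun ρ => C.sem (dRestrict B ρ))^[i] (pointDist S) := by
    funext T
    by_cases hb : B.holds T
    · have h0 : (fun ρ => C.sem (dRestrict B ρ))^[i] (pointDist S) T = 0 := by
        by_contra hc
        exact hsupp T hc hb
      simp [dRestrict, BExp.holds, hb, h0]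
    · simp [dRestrict, BExp.holds, hb]
  -- iterates beyond i vanish
  have hzero : ∀ d, (fun ρ => C.sem (dRestrict B ρ))^[i + 1 + d] (pointDist S) = 0 := by
    intro d
    induction d with
    | zero =>
        rw [Function.iterate_succ_apply', hrB, aux_sem_zero]
    | succ d ihd =>
        have : i + 1 + (d + 1) = (i + 1 + d) + 1 := by omega
        rw [this, Function.iterate_succ_apply', ihd, aux_dRestrict_zero, aux_sem_zero]
  -- closed form of the iterates of the if-command
  have hG : ∀ k, ((Cmd.ifte B C Cmd.skip).sem)^[k] (pointDist S) =
      fun S' => (fun ρ => C.sem (dRestrict B ρ))^[k] (pointDist S) S' +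
        ∑ j ∈ Finset.range k,
          dRestrict (BExp.not B) ((fun ρ => C.sem (dRestrict B ρ))^[j] (pointDist S)) S' := by
    intro k
    induction k with
    | zero => funext S'; simp
    | succ k ihk =>
        rw [Function.iterate_succ_apply', ihk]
        funext S'
        simp only [Cmd.sem]
        have h1 : dRestrict B (fun T =>
            (fun ρ => C.sem (dRestrict B ρ))^[k] (pointDist S) T +
            ∑ j ∈ Finset.range k,
              dRestrict (BExp.not B) ((fun ρ => C.sem (dRestrict B ρ))^[j] (pointDist S)) T)
            = dRestrict B ((fun ρ => C.sem (dRestrict B ρ))^[k] (pointDist S)) := by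
          funext T
          by_cases hb : B.holds T
          · simp [dRestrict, BExp.holds, hb]
          · simp [dRestrict, hb]
        rw [h1]
        have h2 : (fun ρ => C.sem (dRestrict B ρ))^[k + 1] (pointDist S) =
            C.sem (dRestrict B ((fun ρ => C.sem (dRestrict B ρ))^[k] (pointDist S))) := by
          rw [Function.iterate_succ_apply']
        by_cases hb : B.holds S'
        · rw [Finset.sum_range_succ]
          simp [dRestrict, BExp.holds, hb, h2]
        · rw [Finset.sum_range_succ]
          simp [dRestrict, BExp.holds, hb, h2]
          ring
  -- assemble
  rw [aux_pow_sem, hG i]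
  funext S'
  simp only [Cmd.sem]
  rw [tsum_eq_sum (s := Finset.range (i + 1)) ?_]
  · rw [Finset.sum_range_succ]
    have := congrFun hrNB S'
    rw [this]
    exact add_comm _ _
  · intro k hk
    have hki : i + 1 ≤ k := by
      by_contra hc
      exact hk (Finset.mem_range.2 (by omega))
    obtain ⟨d, rfl⟩ : ∃ d, k = i + 1 + d := ⟨k - (i + 1), by omega⟩
    rw [hzero d, aux_dRestrict_zero]
    rfl
end
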